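/- There exists a universal constant C > 0 such that the following holds. Let K ≥ 1 be an integer, (X, 𝒜) and (Y, ℬ) measurable spaces, and μ a probability measure on X × Fin K × Y. Let H be a finite nonempty set of measurable functions from X × Y into the probability simplex Δ_K ⊆ ℝ^K, and suppose there is h* ∈ H such that the conditional expectation of e_A given (X, Y) under μ equals h*(X, Y) almost surely (here (X, A, Y) denotes the identity random element on X × Fin K × Y and e_A the A-th standard basis vector). Let N ≥ 1, let Z₁, …, Z_N be i.i.d. with law μ, and let ĥ be any H-valued random function minimizing Σ_{i=1}^N ‖h(x_i, y_i) − e_{a_i}‖₂² over h ∈ H (where Z_i = (x_i, a_i, y_i)). Then for every δ ∈ (0,1), with probability at least 1 − δ: E_{(x,a,y)∼μ}[ ‖ĥ(x,y) − e_a‖₂² − ‖h*(x,y) − e_a‖₂² ] ≤ C·log(|H|/δ)/N, where the expectation is taken over a fresh draw from μ with ĥ fixed. -/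

import Mathlib

open scoped BigOperators ENNReal
open MeasureTheory

lemma exp_le_one_add_sq {x : ℝ} (hx : |x| ≤ 1) : Real.exp x ≤ 1 + x + x ^ 2 := by
  have h := Real.exp_bound hx (n := 2) (by norm_num)
  have hs : ∑ m ∈ Finset.range 2, x ^ m / m.factorial = 1 + x := by
    simp [Finset.sum_range_succ]
  rw [hs] at h
  have h2 : Real.exp x - (1 + x) ≤ |x| ^ 2 * (3 / (2 * 2)) := (abs_le.mp h).2
  have h3 : |x| ^ 2 = x ^ 2 := sq_abs x
  nlinarith [sq_nonneg x]

lemma integrable_of_bdd {Z : Type*} [MeasurableSpace Z] {μ : Measure Z} [IsFiniteMeasure μ]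
    {f : Z → ℝ} {c : ℝ} (hf : Measurable f) (h : ∀ z, |f z| ≤ c) : Integrable f μ :=
  ⟨hf.aestronglyMeasurable,
    HasFiniteIntegral.of_bounded (C := c) (ae_of_all _ (by simpa [Real.norm_eq_abs] using h))⟩

lemma chernoff_step {Z : Type} [MeasurableSpace Z] (μ : Measure Z) [IsProbabilityMeasure μ]
    (f : Z → ℝ) (hf : Measurable f) (hb : ∀ z, |f z| ≤ 2)
    (hvar : ∫ z, (f z) ^ 2 ∂μ ≤ 8 * ∫ z, f z ∂μ) (N : ℕ) :
    Measure.pi (fun _ : Fin N => μ) {ω | ∑ i, f (ω i) ≤ 0} ≤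
      ENNReal.ofReal (Real.exp (-((N : ℝ) * (∫ z, f z ∂μ)) / 36)) := by
  set a : ℝ := ∫ z, f z ∂μ with ha
  have hfint : Integrable f μ := integrable_of_bdd hf hb
  have hf2int : Integrable (fun z => (f z) ^ 2) μ :=
    integrable_of_bdd (hf.pow_const 2) (c := 4) (fun z => by
      have := hb z; rw [abs_pow]; nlinarith [abs_nonneg (f z)])
  -- single-coordinate mgf bound
  set φ : Z → ℝ := fun z => Real.exp (-f z / 12) with hφ
  have hφmeas : Measurable φ := (hf.neg.div_const 12).exp
  have hφbd : ∀ z, |φ z| ≤ Real.exp 1 := fun z => by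
    rw [abs_of_pos (Real.exp_pos _)]
    apply Real.exp_le_exp.mpr
    have := abs_le.mp (hb z); linarith
  have hφint : Integrable φ μ := integrable_of_bdd hφmeas hφbd
  have hr : ∫ z, φ z ∂μ ≤ Real.exp (-a / 36) := by
    have hpt : ∀ z, φ z ≤ 1 + (-f z / 12) + (f z) ^ 2 / 144 := fun z => by
      have h1 : |(-f z / 12)| ≤ 1 := by
        rw [abs_div, abs_neg, abs_of_pos (by norm_num : (0:ℝ) < 12)]
        have := hb z; linarith
      have := exp_le_one_add_sq h1
      calc φ z ≤ 1 + (-f z / 12) + (-f z / 12) ^ 2 := this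
        _ = 1 + (-f z / 12) + (f z) ^ 2 / 144 := by ring
    have hmono : ∫ z, φ z ∂μ ≤ ∫ z, (1 + (-f z / 12) + (f z) ^ 2 / 144) ∂μ := by
      apply integral_mono hφint _ hpt
      exact ((integrable_const 1).add (hfint.neg.div_const 12)).add (hf2int.div_const 144)
    have hcalc : ∫ z, (1 + (-f z / 12) + (f z) ^ 2 / 144) ∂μ
        = 1 + (-a / 12) + (∫ z, (f z) ^ 2 ∂μ) / 144 := by
      have e1 : ∫ z, (1 + (-f z / 12) + (f z) ^ 2 / 144) ∂μ
          = (∫ z, (1 + (-f z / 12)) ∂μ) + ∫ z, (f z) ^ 2 / 144 ∂μ :=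
        integral_add ((integrable_const 1).add (hfint.neg.div_const 12)) (hf2int.div_const 144)
      have e2 : ∫ z, (1 + (-f z / 12)) ∂μ = (∫ z, (1:ℝ) ∂μ) + ∫ z, (-f z / 12) ∂μ :=
        integral_add (integrable_const 1) (hfint.neg.div_const 12)
      have e3 : ∫ z, (-f z / 12) ∂μ = (∫ z, -f z ∂μ) / 12 := integral_div _ _
      have e4 : ∫ z, -f z ∂μ = -a := integral_neg f
      have e5 : ∫ z, (f z) ^ 2 / 144 ∂μ = (∫ z, (f z) ^ 2 ∂μ) / 144 := integral_div _ _
      rw [e1, e2, e3, e4, e5]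
      simp
    have : 1 + (-a / 12) + (∫ z, (f z) ^ 2 ∂μ) / 144 ≤ 1 + (-a / 36) := by linarith
    calc ∫ z, φ z ∂μ ≤ 1 + (-a / 36) := by linarith
      _ ≤ Real.exp (-a / 36) := by linarith [Real.add_one_le_exp (-a / 36)]
  have hrnn : 0 ≤ ∫ z, φ z ∂μ := integral_nonneg fun z => (Real.exp_pos _).le
  -- product
  letI : MeasureSpace Z := ⟨μ⟩
  have hvol : Measure.pi (fun _ : Fin N => μ) = (volume : Measure (Fin N → Z)) :=
    (volume_pi).symm
  set g : (Fin N → Z) → ℝ := fun ω => ∏ i, φ (ω i) with hg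
  have hgint : Integrable g (volume : Measure (Fin N → Z)) :=
    Integrable.fintype_prod (f := fun _ : Fin N => φ) (fun i => hφint)
  have hgval : ∫ ω, g ω = (∫ z, φ z ∂μ) ^ N := by
    have := integral_fintype_prod_eq_pow (ι := Fin N) (μ := μ) φ
    rw [hvol, Fintype.card_fin] at this
    exact this
  have hsub : {ω : Fin N → Z | ∑ i, f (ω i) ≤ 0} ⊆ {ω | 1 ≤ g ω} := by
    intro ω hω
    have : g ω = Real.exp (∑ i, (-f (ω i) / 12)) := by
      rw [Real.exp_sum]
    rw [Set.mem_setOf_eq, this]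
    have : (0:ℝ) ≤ ∑ i, (-f (ω i) / 12) := by
      rw [← Finset.sum_div]
      have : ∑ i, -f (ω i) = -∑ i, f (ω i) := by rw [Finset.sum_neg_distrib]
      rw [this]
      have h0 : ∑ i, f (ω i) ≤ 0 := hω
      have : (0:ℝ) ≤ -∑ i, f (ω i) := by linarith
      positivity
    calc (1:ℝ) = Real.exp 0 := (Real.exp_zero).symm
      _ ≤ _ := Real.exp_le_exp.mpr this
  have hmarkov : ((volume : Measure (Fin N → Z)) {ω | 1 ≤ g ω}).toReal ≤ ∫ ω, g ω := by
    have := mul_meas_ge_le_integral_of_nonneg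
      (μ := (volume : Measure (Fin N → Z))) (f := g)
      (ae_of_all _ fun ω => Finset.prod_nonneg fun i _ => (Real.exp_pos _).le) hgint 1
    simpa [Measure.real] using this
  haveI : IsProbabilityMeasure (volume : Measure (Fin N → Z)) := by
    rw [← hvol]; infer_instance
  have hfin : (volume : Measure (Fin N → Z)) {ω | 1 ≤ g ω} ≠ ⊤ := measure_ne_top _ _
  have hmain : Measure.pi (fun _ : Fin N => μ) {ω | ∑ i, f (ω i) ≤ 0}
      ≤ ENNReal.ofReal ((∫ z, φ z ∂μ) ^ N) := by
    rw [hvol]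
    refine le_trans (measure_mono hsub) ?_
    rw [ENNReal.le_ofReal_iff_toReal_le hfin (by positivity)]
    calc _ ≤ ∫ ω, g ω := hmarkov
      _ = _ := hgval
  refine le_trans hmain (ENNReal.ofReal_le_ofReal ?_)
  calc (∫ z, φ z ∂μ) ^ N ≤ (Real.exp (-a / 36)) ^ N := pow_le_pow_left₀ hrnn hr N
    _ = Real.exp (-((N:ℝ) * a) / 36) := by
        rw [← Real.exp_nat_mul]; ring_nf

lemma condexp_key {K : ℕ} {X Y : Type} [MeasurableSpace X] [MeasurableSpace Y]
    (μ : Measure (X × Fin K × Y)) [IsProbabilityMeasure μ]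
    (hstar : X × Y → Fin K → ℝ) (k : Fin K)
    (hce : (μ[(fun z : X × Fin K × Y => if z.2.1 = k then (1 : ℝ) else 0) |
            MeasurableSpace.comap (fun z : X × Fin K × Y => (z.1, z.2.2)) inferInstance])
          =ᵐ[μ] fun z => hstar (z.1, z.2.2) k)
    (g : X × Y → ℝ) (hg : Measurable g) (c : ℝ) (hgb : ∀ p, |g p| ≤ c) :
    ∫ z, g (z.1, z.2.2) * (if z.2.1 = k then (1 : ℝ) else 0) ∂μ
      = ∫ z, g (z.1, z.2.2) * hstar (z.1, z.2.2) k ∂μ := by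
  have hπmeas : Measurable (fun z : X × Fin K × Y => (z.1, z.2.2)) :=
    measurable_fst.prodMk (measurable_snd.snd)
  have hm : MeasurableSpace.comap (fun z : X × Fin K × Y => (z.1, z.2.2)) inferInstance
      ≤ (inferInstance : MeasurableSpace (X × Fin K × Y)) := hπmeas.comap_le
  have hfmeas : Measurable (fun z : X × Fin K × Y => if z.2.1 = k then (1 : ℝ) else 0) := by
    apply Measurable.ite _ measurable_const measurable_const
    exact (measurable_snd.fst) (measurableSet_singleton k)
  have hfint : Integrable (fun z : X × Fin K × Y => if z.2.1 = k then (1 : ℝ) else 0) μ :=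
    integrable_of_bdd hfmeas (c := 1)
      (fun z => by by_cases h : z.2.1 = k <;> simp [h])
  have hGsm : StronglyMeasurable[MeasurableSpace.comap
        (fun z : X × Fin K × Y => (z.1, z.2.2)) inferInstance]
      (fun z : X × Fin K × Y => g (z.1, z.2.2)) :=
    (hg.comp (Measurable.of_comap_le le_rfl)).stronglyMeasurable
  have hpull : μ[(fun z : X × Fin K × Y => g (z.1, z.2.2)) *
        (fun z => if z.2.1 = k then (1 : ℝ) else 0) |
        MeasurableSpace.comap (fun z : X × Fin K × Y => (z.1, z.2.2)) inferInstance]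
      =ᵐ[μ] (fun z : X × Fin K × Y => g (z.1, z.2.2)) *
        μ[(fun z : X × Fin K × Y => if z.2.1 = k then (1 : ℝ) else 0) |
        MeasurableSpace.comap (fun z : X × Fin K × Y => (z.1, z.2.2)) inferInstance] :=
    condExp_stronglyMeasurable_mul_of_bound hm hGsm hfint c
      (ae_of_all _ fun z => by simpa [Real.norm_eq_abs] using hgb (z.1, z.2.2))
  have h1 := (integral_condExp (μ := μ) (f := (fun z : X × Fin K × Y => g (z.1, z.2.2)) *
        (fun z => if z.2.1 = k then (1 : ℝ) else 0)) hm).symm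
  have h2 := integral_congr_ae hpull
  have h3 := integral_congr_ae (μ := μ) ((Filter.EventuallyEq.refl (ae μ)
      (fun z : X × Fin K × Y => g (z.1, z.2.2))).mul hce)
  calc ∫ z, g (z.1, z.2.2) * (if z.2.1 = k then (1 : ℝ) else 0) ∂μ
      = ∫ z, ((fun z : X × Fin K × Y => g (z.1, z.2.2)) *
          (fun z : X × Fin K × Y => if z.2.1 = k then (1 : ℝ) else 0)) z ∂μ := rfl
    _ = ∫ z, ((fun z : X × Fin K × Y => g (z.1, z.2.2)) *
          μ[(fun z : X × Fin K × Y => if z.2.1 = k then (1 : ℝ) else 0) |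
          MeasurableSpace.comap (fun z : X × Fin K × Y => (z.1, z.2.2)) inferInstance]) z ∂μ :=
        h1.trans h2
    _ = ∫ z, g (z.1, z.2.2) * hstar (z.1, z.2.2) k ∂μ := h3

theorem stmt_9 : ∃ C : ℝ, 0 < C ∧
    ∀ (K : ℕ), 1 ≤ K →
    ∀ (X Y : Type) (_ : MeasurableSpace X) (_ : MeasurableSpace Y)
      (μ : Measure (X × Fin K × Y)), IsProbabilityMeasure μ →
    ∀ (H : Set (X × Y → Fin K → ℝ)), H.Finite → H.Nonempty →
      (∀ h ∈ H, Measurable h ∧ ∀ p, h p ∈ stdSimplex ℝ (Fin K)) →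
    ∀ hstar ∈ H,
      (∀ k : Fin K,
        (μ[(fun z : X × Fin K × Y => if z.2.1 = k then (1 : ℝ) else 0) |
            MeasurableSpace.comap (fun z : X × Fin K × Y => (z.1, z.2.2)) inferInstance])
          =ᵐ[μ] fun z => hstar (z.1, z.2.2) k) →
    ∀ (N : ℕ), 1 ≤ N →
    ∀ (hhat : (Fin N → X × Fin K × Y) → X × Y → Fin K → ℝ),
      (∀ ω, hhat ω ∈ H ∧ ∀ h ∈ H,
        (∑ i : Fin N, ∑ k : Fin K,
            (hhat ω ((ω i).1, (ω i).2.2) k - if (ω i).2.1 = k then (1 : ℝ) else 0) ^ 2) ≤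
          ∑ i : Fin N, ∑ k : Fin K,
            (h ((ω i).1, (ω i).2.2) k - if (ω i).2.1 = k then (1 : ℝ) else 0) ^ 2) →
    ∀ δ : ℝ, 0 < δ → δ < 1 →
      ENNReal.ofReal (1 - δ) ≤
        Measure.pi (fun _ : Fin N => μ)
          {ω | ∫ z, ((∑ k : Fin K,
                  (hhat ω (z.1, z.2.2) k - if z.2.1 = k then (1 : ℝ) else 0) ^ 2) -
                ∑ k : Fin K,
                  (hstar (z.1, z.2.2) k - if z.2.1 = k then (1 : ℝ) else 0) ^ 2) ∂μ ≤
            C * Real.log (H.ncard / δ) / N} := by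
  refine ⟨36, by norm_num, ?_⟩
  intro K hK X Y mX mY μ hμ H Hfin Hne Hmeas hstar hstarH hce N hN hhat herm δ hδ0 hδ1
  -- notation
  set ε : ℝ := 36 * Real.log (H.ncard / δ) / N with hε
  set L : (X × Y → Fin K → ℝ) → (X × Fin K × Y) → ℝ :=
    fun h z => ∑ k : Fin K, (h (z.1, z.2.2) k - if z.2.1 = k then (1 : ℝ) else 0) ^ 2 with hL
  set ell : (X × Y → Fin K → ℝ) → (X × Fin K × Y) → ℝ :=
    fun h z => L h z - L hstar z with hell
  -- coordinate facts
  have hcoordbd : ∀ h ∈ H, ∀ p k, 0 ≤ h p k ∧ h p k ≤ 1 := by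
    intro h hh p k
    obtain ⟨hnn, hsum⟩ := (Hmeas h hh).2 p
    refine ⟨hnn k, ?_⟩
    calc h p k ≤ ∑ j : Fin K, h p j := Finset.single_le_sum (fun j _ => hnn j) (Finset.mem_univ k)
      _ = 1 := hsum
  have hcoordmeas : ∀ h ∈ H, ∀ k, Measurable (fun z : X × Fin K × Y => h (z.1, z.2.2) k) := by
    intro h hh k
    exact ((measurable_pi_apply k).comp (Hmeas h hh).1).comp
      (measurable_fst.prodMk measurable_snd.snd)
  have hemeas : ∀ k : Fin K, Measurable (fun z : X × Fin K × Y =>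
      if z.2.1 = k then (1 : ℝ) else 0) := by
    intro k
    exact Measurable.ite ((measurable_snd.fst) (measurableSet_singleton k))
      measurable_const measurable_const
  have hesum : ∀ z : X × Fin K × Y,
      (∑ k : Fin K, if z.2.1 = k then (1 : ℝ) else 0) = 1 := by
    intro z; simp
  have hesq : ∀ (z : X × Fin K × Y) (k : Fin K),
      (0 ≤ (if z.2.1 = k then (1:ℝ) else 0)) ∧ (if z.2.1 = k then (1:ℝ) else 0) ≤ 1 := by
    intro z k; by_cases h : z.2.1 = k <;> simp [h]
  -- bounds on L
  have hL0 : ∀ h, ∀ z, 0 ≤ L h z := fun h z => Finset.sum_nonneg fun k _ => sq_nonneg _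
  have hL2 : ∀ h ∈ H, ∀ z, L h z ≤ 2 := by
    intro h hh z
    have : L h z ≤ ∑ k : Fin K, ((h (z.1, z.2.2) k) + if z.2.1 = k then (1:ℝ) else 0) := by
      apply Finset.sum_le_sum
      intro k _
      obtain ⟨h0, h1⟩ := hcoordbd h hh (z.1, z.2.2) k
      obtain ⟨e0, e1⟩ := hesq z k
      nlinarith
    rw [Finset.sum_add_distrib, ((Hmeas h hh).2 (z.1, z.2.2)).2, hesum z] at this
    linarith
  have hLmeas : ∀ h ∈ H, Measurable (L h) := by
    intro h hh
    apply Finset.measurable_sum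
    intro k _
    exact ((hcoordmeas h hh k).sub (hemeas k)).pow_const 2
  have hellmeas : ∀ h ∈ H, Measurable (ell h) :=
    fun h hh => (hLmeas h hh).sub (hLmeas hstar hstarH)
  have hellbd : ∀ h ∈ H, ∀ z, |ell h z| ≤ 2 := by
    intro h hh z
    rw [abs_le]
    constructor
    · have := hL2 hstar hstarH z; have := hL0 h z; simp only [hell]; linarith
    · have := hL2 h hh z; have := hL0 hstar z; simp only [hell]; linarith
  -- the well-specified identity
  have key0 : ∀ h ∈ H, ∀ k : Fin K,
      ∫ z, (h (z.1, z.2.2) k - hstar (z.1, z.2.2) k) *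
        (hstar (z.1, z.2.2) k - if z.2.1 = k then (1 : ℝ) else 0) ∂μ = 0 := by
    intro h hh k
    have hgmeas : Measurable (fun p : X × Y => h p k - hstar p k) :=
      ((measurable_pi_apply k).comp (Hmeas h hh).1).sub
        ((measurable_pi_apply k).comp (Hmeas hstar hstarH).1)
    have hgbd : ∀ p : X × Y, |h p k - hstar p k| ≤ 1 := by
      intro p
      obtain ⟨a0, a1⟩ := hcoordbd h hh p k
      obtain ⟨b0, b1⟩ := hcoordbd hstar hstarH p k
      rw [abs_le]; constructor <;> linarith
    have hkey := condexp_key μ hstar k (hce k) (fun p => h p k - hstar p k) hgmeas 1 hgbd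
    have int1 : Integrable (fun z : X × Fin K × Y =>
        (h (z.1, z.2.2) k - hstar (z.1, z.2.2) k) * hstar (z.1, z.2.2) k) μ := by
      apply integrable_of_bdd (c := 1)
        ((hgmeas.comp (measurable_fst.prodMk measurable_snd.snd)).mul
          (hcoordmeas hstar hstarH k))
      intro z
      simp only [Pi.mul_apply, Function.comp_apply, abs_mul]
      obtain ⟨b0, b1⟩ := hcoordbd hstar hstarH (z.1, z.2.2) k
      have := hgbd (z.1, z.2.2)
      have h2 : |hstar (z.1, z.2.2) k| ≤ 1 := by rw [abs_le]; constructor <;> linarith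
      calc |h (z.1, z.2.2) k - hstar (z.1, z.2.2) k| * |hstar (z.1, z.2.2) k| ≤ 1 * 1 :=
        mul_le_mul this h2 (abs_nonneg _) zero_le_one
        _ = 1 := by norm_num
    have int2 : Integrable (fun z : X × Fin K × Y =>
        (h (z.1, z.2.2) k - hstar (z.1, z.2.2) k) *
          if z.2.1 = k then (1 : ℝ) else 0) μ := by
      apply integrable_of_bdd (c := 1)
        ((hgmeas.comp (measurable_fst.prodMk measurable_snd.snd)).mul (hemeas k))
      intro z
      simp only [Pi.mul_apply, Function.comp_apply, abs_mul]
      obtain ⟨e0, e1⟩ := hesq z k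
      have := hgbd (z.1, z.2.2)
      have h2 : |(if z.2.1 = k then (1:ℝ) else 0)| ≤ 1 := by
        rw [abs_le]; constructor <;> linarith
      calc _ ≤ 1 * 1 := mul_le_mul this h2 (abs_nonneg _) zero_le_one
        _ = (1:ℝ) := by norm_num
    have hsplit : (fun z : X × Fin K × Y => (h (z.1, z.2.2) k - hstar (z.1, z.2.2) k) *
        (hstar (z.1, z.2.2) k - if z.2.1 = k then (1 : ℝ) else 0)) =
        fun z => (h (z.1, z.2.2) k - hstar (z.1, z.2.2) k) * hstar (z.1, z.2.2) k -
          (h (z.1, z.2.2) k - hstar (z.1, z.2.2) k) * if z.2.1 = k then (1 : ℝ) else 0 := by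
      funext z; ring
    rw [hsplit, integral_sub int1 int2, ← hkey, sub_self]
  -- integral identity
  have hDmeas : ∀ h ∈ H, Measurable (fun z : X × Fin K × Y =>
      ∑ k : Fin K, (h (z.1, z.2.2) k - hstar (z.1, z.2.2) k) ^ 2) := by
    intro h hh
    apply Finset.measurable_sum
    intro k _
    exact ((hcoordmeas h hh k).sub (hcoordmeas hstar hstarH k)).pow_const 2
  have hDbd : ∀ h ∈ H, ∀ z : X × Fin K × Y,
      |∑ k : Fin K, (h (z.1, z.2.2) k - hstar (z.1, z.2.2) k) ^ 2| ≤ (K : ℝ) := by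
    intro h hh z
    rw [abs_of_nonneg (Finset.sum_nonneg fun k _ => sq_nonneg _)]
    calc (∑ k : Fin K, (h (z.1, z.2.2) k - hstar (z.1, z.2.2) k) ^ 2)
        ≤ ∑ _k : Fin K, (1:ℝ) := by
          apply Finset.sum_le_sum
          intro k _
          obtain ⟨a0, a1⟩ := hcoordbd h hh (z.1, z.2.2) k
          obtain ⟨b0, b1⟩ := hcoordbd hstar hstarH (z.1, z.2.2) k
          nlinarith
      _ = (K : ℝ) := by simp
  have hDint : ∀ h ∈ H, Integrable (fun z : X × Fin K × Y =>
      ∑ k : Fin K, (h (z.1, z.2.2) k - hstar (z.1, z.2.2) k) ^ 2) μ :=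
    fun h hh => integrable_of_bdd (hDmeas h hh) (hDbd h hh)
  have hellint : ∀ h ∈ H, Integrable (ell h) μ :=
    fun h hh => integrable_of_bdd (hellmeas h hh) (hellbd h hh)
  have hWeq : ∀ h ∈ H, ∫ z, ell h z ∂μ =
      ∫ z, (∑ k : Fin K, (h (z.1, z.2.2) k - hstar (z.1, z.2.2) k) ^ 2) ∂μ := by
    intro h hh
    have hcross_meas : ∀ k : Fin K, Measurable (fun z : X × Fin K × Y =>
        2 * ((h (z.1, z.2.2) k - hstar (z.1, z.2.2) k) *
          (hstar (z.1, z.2.2) k - if z.2.1 = k then (1 : ℝ) else 0))) := by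
      intro k
      exact (((hcoordmeas h hh k).sub (hcoordmeas hstar hstarH k)).mul
        ((hcoordmeas hstar hstarH k).sub (hemeas k))).const_mul 2
    have hcross_bd : ∀ k : Fin K, ∀ z : X × Fin K × Y,
        |2 * ((h (z.1, z.2.2) k - hstar (z.1, z.2.2) k) *
          (hstar (z.1, z.2.2) k - if z.2.1 = k then (1 : ℝ) else 0))| ≤ 4 := by
      intro k z
      obtain ⟨a0, a1⟩ := hcoordbd h hh (z.1, z.2.2) k
      obtain ⟨b0, b1⟩ := hcoordbd hstar hstarH (z.1, z.2.2) k
      obtain ⟨e0, e1⟩ := hesq z k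
      rw [abs_le]
      constructor <;> nlinarith
    have hcross_int : ∀ k : Fin K, Integrable (fun z : X × Fin K × Y =>
        2 * ((h (z.1, z.2.2) k - hstar (z.1, z.2.2) k) *
          (hstar (z.1, z.2.2) k - if z.2.1 = k then (1 : ℝ) else 0))) μ :=
      fun k => integrable_of_bdd (hcross_meas k) (hcross_bd k)
    have hpt : ∀ z : X × Fin K × Y, ell h z =
        (∑ k : Fin K, (h (z.1, z.2.2) k - hstar (z.1, z.2.2) k) ^ 2) +
        ∑ k : Fin K, 2 * ((h (z.1, z.2.2) k - hstar (z.1, z.2.2) k) *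
          (hstar (z.1, z.2.2) k - if z.2.1 = k then (1 : ℝ) else 0)) := by
      intro z
      simp only [hell, hL, ← Finset.sum_sub_distrib, ← Finset.sum_add_distrib]
      apply Finset.sum_congr rfl
      intro k _
      ring
    have : ∫ z, ell h z ∂μ =
        (∫ z, (∑ k : Fin K, (h (z.1, z.2.2) k - hstar (z.1, z.2.2) k) ^ 2) ∂μ) +
        ∫ z, (∑ k : Fin K, 2 * ((h (z.1, z.2.2) k - hstar (z.1, z.2.2) k) *
          (hstar (z.1, z.2.2) k - if z.2.1 = k then (1 : ℝ) else 0))) ∂μ := by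
      rw [← integral_add (hDint h hh) (integrable_finset_sum _ fun k _ => hcross_int k)]
      exact integral_congr_ae (ae_of_all _ hpt)
    rw [this, integral_finset_sum _ fun k _ => hcross_int k]
    have : ∀ k ∈ Finset.univ (α := Fin K), (∫ z, 2 * ((h (z.1, z.2.2) k - hstar (z.1, z.2.2) k) *
        (hstar (z.1, z.2.2) k - if z.2.1 = k then (1 : ℝ) else 0)) ∂μ) = 0 := by
      intro k _
      rw [integral_const_mul, key0 h hh k, mul_zero]
    rw [Finset.sum_congr rfl this]
    simp
  -- variance bound
  have hsqpt : ∀ h ∈ H, ∀ z : X × Fin K × Y, (ell h z) ^ 2 ≤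
      8 * ∑ k : Fin K, (h (z.1, z.2.2) k - hstar (z.1, z.2.2) k) ^ 2 := by
    intro h hh z
    set a : Fin K → ℝ := fun k => h (z.1, z.2.2) k - hstar (z.1, z.2.2) k with ha
    set c : Fin K → ℝ := fun k => h (z.1, z.2.2) k + hstar (z.1, z.2.2) k -
      2 * (if z.2.1 = k then (1:ℝ) else 0) with hc
    have h1 : ell h z = ∑ k : Fin K, a k * c k := by
      simp only [hell, hL, ← Finset.sum_sub_distrib]
      apply Finset.sum_congr rfl
      intro k _
      simp only [ha, hc]
      ring
    have h2 : (∑ k : Fin K, a k * c k) ^ 2 ≤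
        (∑ k : Fin K, a k ^ 2) * ∑ k : Fin K, c k ^ 2 :=
      Finset.sum_mul_sq_le_sq_mul_sq _ _ _
    have h3 : ∑ k : Fin K, c k ^ 2 ≤ 8 := by
      have step : ∑ k : Fin K, c k ^ 2 ≤
          ∑ k : Fin K, (2 * (h (z.1, z.2.2) k - if z.2.1 = k then (1:ℝ) else 0) ^ 2 +
            2 * (hstar (z.1, z.2.2) k - if z.2.1 = k then (1:ℝ) else 0) ^ 2) := by
        apply Finset.sum_le_sum
        intro k _
        simp only [hc]
        nlinarith [sq_nonneg ((h (z.1, z.2.2) k - if z.2.1 = k then (1:ℝ) else 0) -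
          (hstar (z.1, z.2.2) k - if z.2.1 = k then (1:ℝ) else 0))]
      rw [Finset.sum_add_distrib, ← Finset.mul_sum, ← Finset.mul_sum] at step
      have hLh := hL2 h hh z
      have hLs := hL2 hstar hstarH z
      simp only [hL] at hLh hLs
      linarith
    have h4 : 0 ≤ ∑ k : Fin K, a k ^ 2 := Finset.sum_nonneg fun k _ => sq_nonneg _
    calc (ell h z) ^ 2 = (∑ k : Fin K, a k * c k) ^ 2 := by rw [h1]
      _ ≤ (∑ k : Fin K, a k ^ 2) * ∑ k : Fin K, c k ^ 2 := h2
      _ ≤ (∑ k : Fin K, a k ^ 2) * 8 := mul_le_mul_of_nonneg_left h3 h4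
      _ = 8 * ∑ k : Fin K, (h (z.1, z.2.2) k - hstar (z.1, z.2.2) k) ^ 2 := by
          rw [mul_comm]
  have hvar : ∀ h ∈ H, ∫ z, (ell h z) ^ 2 ∂μ ≤ 8 * ∫ z, ell h z ∂μ := by
    intro h hh
    have int1 : Integrable (fun z => (ell h z) ^ 2) μ := by
      apply integrable_of_bdd (c := 4) ((hellmeas h hh).pow_const 2)
      intro z
      rw [abs_pow]
      nlinarith [hellbd h hh z, abs_nonneg (ell h z)]
    have step : ∫ z, (ell h z) ^ 2 ∂μ ≤
        ∫ z, 8 * (∑ k : Fin K, (h (z.1, z.2.2) k - hstar (z.1, z.2.2) k) ^ 2) ∂μ :=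
      integral_mono int1 ((hDint h hh).const_mul 8) (hsqpt h hh)
    rw [integral_const_mul] at step
    rw [hWeq h hh]
    exact step
  -- Chernoff for each h
  have hchern : ∀ h ∈ H,
      Measure.pi (fun _ : Fin N => μ) {ω : Fin N → X × Fin K × Y | ∑ i, ell h (ω i) ≤ 0} ≤
        ENNReal.ofReal (Real.exp (-((N : ℝ) * ∫ z, ell h z ∂μ) / 36)) :=
    fun h hh => chernoff_step μ (ell h) (hellmeas h hh) (hellbd h hh) (hvar h hh) N
  -- final assembly
  suffices hS : ENNReal.ofReal (1 - δ) ≤ Measure.pi (fun _ : Fin N => μ)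
      {ω : Fin N → X × Fin K × Y | ∫ z, ell (hhat ω) z ∂μ ≤ ε} by exact hS
  have hn0 : 0 < H.ncard := (Set.ncard_pos Hfin).mpr Hne
  have hnR : (0:ℝ) < (H.ncard : ℝ) := by exact_mod_cast hn0
  have ht : (0:ℝ) < (H.ncard : ℝ) / δ := div_pos hnR hδ0
  have hNne : (N:ℝ) ≠ 0 := by
    have : (0:ℝ) < (N:ℝ) := by exact_mod_cast hN
    linarith
  have hexp : Real.exp (-((N:ℝ) * ε) / 36) = δ / (H.ncard : ℝ) := by
    have harg : -((N:ℝ) * ε) / 36 = -Real.log ((H.ncard : ℝ) / δ) := by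
      rw [hε]; field_simp
    rw [harg, Real.exp_neg, Real.exp_log ht, inv_div]
  set T := Hfin.toFinset.filter (fun h => ¬ (∫ z, ell h z ∂μ ≤ ε)) with hT
  have hsub : {ω : Fin N → X × Fin K × Y | ¬ (∫ z, ell (hhat ω) z ∂μ ≤ ε)} ⊆
      ⋃ h ∈ T, {ω : Fin N → X × Fin K × Y | ∑ i, ell h (ω i) ≤ 0} := by
    intro ω hω
    have h1 : hhat ω ∈ H := (herm ω).1
    have h2 := (herm ω).2 hstar hstarH
    have hmemT : hhat ω ∈ T := Finset.mem_filter.mpr ⟨Hfin.mem_toFinset.mpr h1, hω⟩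
    have hsumle : ∑ i, ell (hhat ω) (ω i) ≤ 0 := by
      have hdist : ∑ i, ell (hhat ω) (ω i) =
          (∑ i, L (hhat ω) (ω i)) - ∑ i, L hstar (ω i) := by
        simp only [hell, Finset.sum_sub_distrib]
      rw [hdist]
      exact sub_nonpos.mpr h2
    exact Set.mem_biUnion hmemT hsumle
  have hbad : Measure.pi (fun _ : Fin N => μ)
      {ω : Fin N → X × Fin K × Y | ¬ (∫ z, ell (hhat ω) z ∂μ ≤ ε)} ≤ ENNReal.ofReal δ := by
    calc Measure.pi (fun _ : Fin N => μ) {ω | ¬ (∫ z, ell (hhat ω) z ∂μ ≤ ε)}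
        ≤ Measure.pi (fun _ : Fin N => μ)
            (⋃ h ∈ T, {ω : Fin N → X × Fin K × Y | ∑ i, ell h (ω i) ≤ 0}) :=
          measure_mono hsub
      _ ≤ ∑ h ∈ T, Measure.pi (fun _ : Fin N => μ)
            {ω : Fin N → X × Fin K × Y | ∑ i, ell h (ω i) ≤ 0} :=
          measure_biUnion_finset_le _ _
      _ ≤ ∑ _h ∈ T, ENNReal.ofReal (δ / (H.ncard : ℝ)) := by
          apply Finset.sum_le_sum
          intro h hhT
          have hh : h ∈ H := Hfin.mem_toFinset.mp (Finset.mem_filter.mp hhT).1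
          have hεle : ε ≤ ∫ z, ell h z ∂μ := le_of_not_ge (Finset.mem_filter.mp hhT).2
          refine le_trans (hchern h hh) (ENNReal.ofReal_le_ofReal ?_)
          rw [← hexp]
          apply Real.exp_le_exp.mpr
          have hN0 : (0:ℝ) ≤ (N:ℝ) := Nat.cast_nonneg N
          have := mul_le_mul_of_nonneg_left hεle hN0
          linarith
      _ = (T.card : ℝ≥0∞) * ENNReal.ofReal (δ / (H.ncard : ℝ)) := by
          rw [Finset.sum_const, nsmul_eq_mul]
      _ ≤ (H.ncard : ℝ≥0∞) * ENNReal.ofReal (δ / (H.ncard : ℝ)) := by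
          apply mul_le_mul_left
          have hcard : T.card ≤ H.ncard := by
            rw [hT, Set.ncard_eq_toFinset_card H Hfin]
            exact Finset.card_filter_le _ _
          exact_mod_cast hcard
      _ = ENNReal.ofReal δ := by
          rw [← ENNReal.ofReal_natCast, ← ENNReal.ofReal_mul hnR.le]
          congr 1
          field_simp
  have huniv : (1:ℝ≥0∞) ≤ Measure.pi (fun _ : Fin N => μ)
        {ω : Fin N → X × Fin K × Y | ∫ z, ell (hhat ω) z ∂μ ≤ ε} +
      Measure.pi (fun _ : Fin N => μ)
        {ω : Fin N → X × Fin K × Y | ¬ (∫ z, ell (hhat ω) z ∂μ ≤ ε)} := by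
    haveI : IsProbabilityMeasure (Measure.pi (fun _ : Fin N => μ)) := by infer_instance
    calc (1:ℝ≥0∞) = Measure.pi (fun _ : Fin N => μ) Set.univ := (measure_univ).symm
      _ = Measure.pi (fun _ : Fin N => μ)
          ({ω : Fin N → X × Fin K × Y | ∫ z, ell (hhat ω) z ∂μ ≤ ε} ∪
           {ω | ¬ (∫ z, ell (hhat ω) z ∂μ ≤ ε)}) := by
          congr 1
          refine (Set.eq_univ_iff_forall.mpr fun ω => ?_).symm
          by_cases hc : ∫ z, ell (hhat ω) z ∂μ ≤ ε
          · exact Or.inl hc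
          · exact Or.inr hc
      _ ≤ _ := measure_union_le _ _
  have h2 : (1:ℝ≥0∞) ≤ Measure.pi (fun _ : Fin N => μ)
      {ω : Fin N → X × Fin K × Y | ∫ z, ell (hhat ω) z ∂μ ≤ ε} + ENNReal.ofReal δ :=
    le_trans huniv (add_le_add le_rfl hbad)
  rw [show (1:ℝ) - δ = 1 - δ from rfl, ENNReal.ofReal_sub 1 hδ0.le, ENNReal.ofReal_one]
  exact tsub_le_iff_right.mpr h2
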